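/- Let n ≥ 2 and let u(y,z) = ∫₀ᶻ (s² + |y|² − 1)² ds on ℝⁿ = ℝ^{n−1} × ℝ. For every ε > 0 and every open neighborhood U ⊂ ℝⁿ of the equator S' = {(y,0) : |y| = 1}, there exists a smooth function ũ : ℝⁿ → ℝ such that: (i) |ũ(y,z) − u(y,z)| ≤ ε and ‖Dũ(y,z) − Du(y,z)‖ ≤ ε for all (y,z) (C¹-closeness); (ii) ∂ũ/∂z(y,z) > 0 for all (y,z); and (iii) ũ(y,z) = u(y,z) at every point (y,z) of the unit sphere {|y|² + z² = 1} that does not lie in U. -/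

import Mathlib

set_option maxHeartbeats 1000000

/-- The unfolding function `u(y,z) = ∫₀ᶻ (s² + |y|² − 1)² ds` on
`ℝⁿ = ℝ^{n−1} × ℝ` (with `k = n−1`). -/
noncomputable def ufun (k : ℕ) (p : EuclideanSpace ℝ (Fin k) × ℝ) : ℝ :=
  ∫ s in (0:ℝ)..p.2, (s^2 + ‖p.1‖^2 - 1)^2

namespace RegHelper

open Metric Set

variable {k : ℕ}

/-- The "defect" function `q(y,z) = |y|² + z² − 1`. -/
noncomputable def qf (p : EuclideanSpace ℝ (Fin k) × ℝ) : ℝ := ‖p.1‖^2 + p.2^2 - 1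

/-- The explicit polynomial form of the unfolding function. -/
noncomputable def Ff (k : ℕ) (p : EuclideanSpace ℝ (Fin k) × ℝ) : ℝ :=
  p.2^5/5 + 2*(‖p.1‖^2-1)*p.2^3/3 + (‖p.1‖^2-1)^2*p.2

lemma hasDerivAt_slice (a x : ℝ) :
    HasDerivAt (fun z : ℝ => z^5/5 + 2*(a-1)*z^3/3 + (a-1)^2*z) ((x^2 + a - 1)^2) x := by
  have h1 : HasDerivAt (fun z : ℝ => z^5/5 + 2*(a-1)*z^3/3 + (a-1)^2*z)
      ((↑5*x^4)/5 + 2*(a-1)*(↑3*x^2)/3 + (a-1)^2*1) x := by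
    exact (((hasDerivAt_pow 5 x).div_const 5).add
      (((hasDerivAt_pow 3 x).const_mul (2*(a-1))).div_const 3)).add
      ((hasDerivAt_id x).const_mul ((a-1)^2))
  convert h1 using 1
  push_cast; ring

lemma ufun_eq (k : ℕ) : ufun k = Ff k := by
  funext p
  set a : ℝ := ‖p.1‖^2 with ha
  have h : ∀ x ∈ Set.uIcc (0:ℝ) p.2,
      HasDerivAt (fun z : ℝ => z^5/5 + 2*(a-1)*z^3/3 + (a-1)^2*z)
        ((x^2 + a - 1)^2) x := fun x _ => hasDerivAt_slice a x
  have hint : IntervalIntegrable (fun s : ℝ => (s^2 + a - 1)^2) MeasureTheory.volume 0 p.2 := by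
    apply Continuous.intervalIntegrable; continuity
  have := intervalIntegral.integral_eq_sub_of_hasDerivAt h hint
  simp only [ufun, Ff, ← ha, this]
  ring

lemma contDiff_nsq (k : ℕ) :
    ContDiff ℝ (⊤:ℕ∞) (fun p : EuclideanSpace ℝ (Fin k) × ℝ => ‖p.1‖^2) :=
  (contDiff_fst (E := EuclideanSpace ℝ (Fin k)) (F := ℝ)).norm_sq ℝ

lemma contDiff_Ff (k : ℕ) : ContDiff ℝ (⊤:ℕ∞) (Ff k) := by
  have h1 := contDiff_nsq k
  have h2 : ContDiff ℝ (⊤:ℕ∞) (fun p : EuclideanSpace ℝ (Fin k) × ℝ => p.2) := contDiff_snd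
  exact (((h2.pow 5).div_const 5).add
      ((contDiff_const.mul (h1.sub contDiff_const)).mul (h2.pow 3) |>.div_const 3)).add
    (((h1.sub contDiff_const).pow 2).mul h2)

lemma contDiff_qf (k : ℕ) : ContDiff ℝ (⊤:ℕ∞) (qf (k := k)) := by
  have h2 : ContDiff ℝ (⊤:ℕ∞) (fun p : EuclideanSpace ℝ (Fin k) × ℝ => p.2) := contDiff_snd
  exact ((contDiff_nsq k).add (h2.pow 2)).sub contDiff_const

lemma equator_compact (k : ℕ) :
    IsCompact {p : EuclideanSpace ℝ (Fin k) × ℝ | p.2 = 0 ∧ ‖p.1‖ = 1} := by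
  have : {p : EuclideanSpace ℝ (Fin k) × ℝ | p.2 = 0 ∧ ‖p.1‖ = 1}
      = (Metric.sphere (0 : EuclideanSpace ℝ (Fin k)) 1) ×ˢ ({0} : Set ℝ) := by
    ext p
    simp only [Set.mem_setOf_eq, Set.mem_prod, mem_sphere_iff_norm, sub_zero,
      Set.mem_singleton_iff]
    tauto
  rw [this]
  exact (isCompact_sphere 0 1).prod isCompact_singleton

lemma sphere_near_equator {z₁ : ℝ} (hz₁ : 0 < z₁) (hz₁' : z₁ ≤ 1/2)
    (p : EuclideanSpace ℝ (Fin k) × ℝ) (hp : ‖p.1‖^2 + p.2^2 = 1) (hz : |p.2| < z₁) :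
    ∃ e ∈ {p : EuclideanSpace ℝ (Fin k) × ℝ | p.2 = 0 ∧ ‖p.1‖ = 1}, dist p e ≤ z₁ := by
  have ht2 : ‖p.1‖^2 = 1 - p.2^2 := by linarith
  have hz2 : p.2^2 < z₁^2 := by
    have := abs_nonneg p.2
    nlinarith [sq_abs p.2]
  have ht2' : (3:ℝ)/4 ≤ ‖p.1‖^2 := by nlinarith
  have htpos : (1:ℝ)/2 ≤ ‖p.1‖ := by nlinarith [norm_nonneg p.1]
  have htne : ‖p.1‖ ≠ 0 := by positivity
  have htle1 : ‖p.1‖ ≤ 1 := by nlinarith [norm_nonneg p.1]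
  refine ⟨((‖p.1‖⁻¹ : ℝ) • p.1, 0), ⟨rfl, ?_⟩, ?_⟩
  · rw [norm_smul, norm_inv, norm_norm, inv_mul_cancel₀ htne]
  · rw [Prod.dist_eq]
    have h1 : dist p.1 ((‖p.1‖⁻¹ : ℝ) • p.1) = 1 - ‖p.1‖ := by
      rw [dist_eq_norm]
      have : p.1 - (‖p.1‖⁻¹ : ℝ) • p.1 = (1 - ‖p.1‖⁻¹) • p.1 := by
        rw [sub_smul, one_smul]
      rw [this, norm_smul, Real.norm_eq_abs]
      rw [abs_of_nonpos (by
        have h0 : (0:ℝ) < ‖p.1‖ := by linarith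
        have : (1:ℝ) ≤ ‖p.1‖⁻¹ := by
          rw [le_inv_comm₀ one_pos h0]; simpa using htle1
        linarith)]
      have h0 : (0:ℝ) < ‖p.1‖ := by linarith
      field_simp
      ring
    have h2 : dist p.2 (0:ℝ) = |p.2| := by simp [Real.dist_eq]
    rw [h1, h2]
    have : 1 - ‖p.1‖ ≤ z₁ := by nlinarith
    exact max_le this (le_of_lt hz)

lemma hasCompactSupport_psiq (ψ : ContDiffBump (0:ℝ)) (hψ : ψ.rOut ≤ 1) :
    HasCompactSupport (fun p : EuclideanSpace ℝ (Fin k) × ℝ => ψ (qf p)) := by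
  apply HasCompactSupport.intro (isCompact_closedBall (0 : EuclideanSpace ℝ (Fin k) × ℝ) 2)
  intro x hx
  apply ψ.zero_of_le_dist
  rw [Real.dist_eq, sub_zero]
  have hnx : (2:ℝ) < ‖x‖ := by
    simpa [mem_closedBall, dist_zero_right, not_le] using hx
  have : (2:ℝ) < max ‖x.1‖ ‖x.2‖ := by rwa [← Prod.norm_def]
  have h4 : (4:ℝ) < ‖x.1‖^2 + x.2^2 := by
    rcases lt_max_iff.1 this with h | h
    · nlinarith [sq_nonneg x.2, norm_nonneg x.1]
    · rw [Real.norm_eq_abs] at h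
      nlinarith [sq_nonneg ‖x.1‖, sq_abs x.2, abs_nonneg x.2]
  have : (3:ℝ) < qf x := by simp only [qf]; linarith
  have : ψ.rOut ≤ qf x := by linarith
  calc ψ.rOut ≤ qf x := this
    _ ≤ |qf x| := le_abs_self _

lemma arith1 (a s δ c : ℝ) (hδ : 0 < δ) (hc : c = δ^2/2) :
    0 < (s^2 + a - 1)^2 + (δ * (2*s*s + (a + s^2 - 1)*1) + c * 1) := by
  nlinarith [sq_nonneg (a + s^2 - 1 + δ/2), mul_nonneg hδ.le (sq_nonneg s), sq_nonneg δ]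

lemma arith2 (a s δ c z₁ M x y : ℝ) (hδ : 0 < δ) (hc : c = δ^2/2)
    (hM : 1 ≤ M) (hδM : δ*M ≤ z₁^2/4) (hql : -(z₁^2/8) < a + s^2 - 1)
    (hs : z₁^2/4 ≤ s^2) (hx : 0 ≤ x) (hy : -M ≤ y) (hz₁ : 0 < z₁) :
    0 < (s^2 + a - 1)^2 + (δ * (2*s*s + (a + s^2 - 1)*1) + c * (1 * x + y)) := by
  have hc0 : 0 ≤ c := by rw [hc]; positivity
  have h1 : 0 ≤ c * (1 * x) := by nlinarith
  have h2 : -(c*M) ≤ c*y := by nlinarith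
  have h3 : c*M ≤ δ*z₁^2/8 := by
    have h := mul_le_mul_of_nonneg_left hδM hδ.le
    nlinarith
  have h4 : δ*(z₁^2*3/8) ≤ δ*(2*s*s + (a+s^2-1)*1) := by
    apply mul_le_mul_of_nonneg_left ?_ hδ.le
    linarith
  have h5 : 0 < δ*z₁^2 := by positivity
  nlinarith [sq_nonneg (s^2 + a - 1)]

lemma arith3 (a s δ c η M DA DB : ℝ) (hδ : 0 < δ) (hδ1 : δ ≤ 1) (hc : c = δ^2/2)
    (hM : 1 ≤ M) (hδM : δ*M ≤ η^2/2) (hη : 0 < η) (hq : η ≤ |a + s^2 - 1|)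
    (hDA : |DA| ≤ M) (hDB : |DB| ≤ M) :
    0 < (s^2 + a - 1)^2 + (δ * DA + c * DB) := by
  have hM0 : (0:ℝ) < M := by linarith
  have hq2 : η^2 ≤ (s^2 + a - 1)^2 := by
    nlinarith [sq_abs (a + s^2 - 1), abs_nonneg (a + s^2 - 1), sq_nonneg (s^2+a-1)]
  have h1 : -(δ*M) ≤ δ * DA := by nlinarith [(abs_le.1 hDA).1]
  have h2 : -(c*M) ≤ c * DB := by
    have hc0 : 0 ≤ c := by rw [hc]; positivity
    nlinarith [(abs_le.1 hDB).1]
  have h3 : c*M ≤ δ*M/2 := by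
    nlinarith [mul_nonneg (mul_nonneg hδ.le (sub_nonneg.2 hδ1)) (by linarith : (0:ℝ) ≤ M)]
  nlinarith

lemma sq_quarter_le {z w : ℝ} (h : w/2 ≤ |z|) (hw : 0 ≤ w) : w^2/4 ≤ z^2 := by
  nlinarith [sq_abs z, abs_nonneg z]


end RegHelper

/-- For `n ≥ 2`, every `ε > 0` and every open neighborhood `U` of the equator
`S' = {(y,0) : |y| = 1}`, there is a smooth `ũ` which is `C¹`-`ε`-close to `u`,
has everywhere positive `z`-derivative, and agrees with `u` at every point of
the unit sphere `{|y|² + z² = 1}` not lying in `U`. -/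
theorem exists_regularizing_unfolding (n : ℕ) (hn : 2 ≤ n)
    (ε : ℝ) (hε : 0 < ε)
    (U : Set (EuclideanSpace ℝ (Fin (n - 1)) × ℝ)) (hU : IsOpen U)
    (hSU : {p : EuclideanSpace ℝ (Fin (n - 1)) × ℝ | p.2 = 0 ∧ ‖p.1‖ = 1} ⊆ U) :
    ∃ ut : EuclideanSpace ℝ (Fin (n - 1)) × ℝ → ℝ,
      ContDiff ℝ (⊤ : ℕ∞) ut ∧
      (∀ p, |ut p - ufun (n - 1) p| ≤ ε ∧
        ‖fderiv ℝ ut p - fderiv ℝ (ufun (n - 1)) p‖ ≤ ε) ∧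
      (∀ p : EuclideanSpace ℝ (Fin (n - 1)) × ℝ,
        0 < deriv (fun z => ut (p.1, z)) p.2) ∧
      (∀ p, ‖p.1‖^2 + p.2^2 = 1 → p ∉ U → ut p = ufun (n - 1) p) := by
  classical
  obtain ⟨r, hr0, hrU⟩ := (RegHelper.equator_compact (n-1)).exists_thickening_subset_open hU hSU
  set z₁ : ℝ := min (r/2) (1/2) with hz₁def
  have hz₁pos : 0 < z₁ := lt_min (by linarith) (by norm_num)
  have hz₁le : z₁ ≤ 1/2 := min_le_right _ _
  have hz₁r : z₁ < r := lt_of_le_of_lt (min_le_left _ _) (by linarith)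
  set η : ℝ := z₁^2/8 with hηdef
  have hηpos : 0 < η := by positivity
  have hη1 : 2*η ≤ 1 := by nlinarith
  set ψ : ContDiffBump (0:ℝ) := ⟨η, 2*η, hηpos, by linarith⟩ with hψdef
  set χ : ContDiffBump (0:ℝ) := ⟨z₁/2, z₁, by linarith, by linarith⟩ with hχdef
  set A : EuclideanSpace ℝ (Fin (n-1)) × ℝ → ℝ :=
    fun p => RegHelper.qf p * p.2 * ψ (RegHelper.qf p) with hAdef
  set B : EuclideanSpace ℝ (Fin (n-1)) × ℝ → ℝ :=
    fun p => p.2 * χ p.2 * ψ (RegHelper.qf p) with hBdef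
  have hψc : ContDiff ℝ (⊤:ℕ∞) (fun p : EuclideanSpace ℝ (Fin (n-1)) × ℝ => ψ (RegHelper.qf p)) :=
    ψ.contDiff.comp (RegHelper.contDiff_qf (n-1))
  have hAc : ContDiff ℝ (⊤:ℕ∞) A :=
    ((RegHelper.contDiff_qf (n-1)).mul contDiff_snd).mul hψc
  have hBc : ContDiff ℝ (⊤:ℕ∞) B :=
    (contDiff_snd.mul (χ.contDiff.comp contDiff_snd)).mul hψc
  have hψq : HasCompactSupport (fun p : EuclideanSpace ℝ (Fin (n-1)) × ℝ => ψ (RegHelper.qf p)) :=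
    RegHelper.hasCompactSupport_psiq ψ (by simp only [hψdef]; linarith)
  have hAs : HasCompactSupport A := by
    have h : A = (fun p : EuclideanSpace ℝ (Fin (n-1)) × ℝ => RegHelper.qf p * p.2)
        * (fun p => ψ (RegHelper.qf p)) := rfl
    rw [h]; exact HasCompactSupport.mul_left hψq
  have hBs : HasCompactSupport B := by
    have h : B = (fun p : EuclideanSpace ℝ (Fin (n-1)) × ℝ => p.2 * χ p.2)
        * (fun p => ψ (RegHelper.qf p)) := rfl
    rw [h]; exact HasCompactSupport.mul_left hψq
  obtain ⟨MA0, hMA0⟩ := hAs.exists_bound_of_continuous hAc.continuous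
  obtain ⟨MA1, hMA1⟩ := (hAs.fderiv ℝ).exists_bound_of_continuous (hAc.continuous_fderiv (by simp))
  obtain ⟨MB0, hMB0⟩ := hBs.exists_bound_of_continuous hBc.continuous
  obtain ⟨MB1, hMB1⟩ := (hBs.fderiv ℝ).exists_bound_of_continuous (hBc.continuous_fderiv (by simp))
  have hχcd : ContDiff ℝ (⊤:ℕ∞) (χ : ℝ → ℝ) := χ.contDiff
  have hzχd : HasCompactSupport (fun z : ℝ => z * deriv (χ : ℝ → ℝ) z) := by
    have h : (fun z : ℝ => z * deriv (χ:ℝ→ℝ) z) = (fun z : ℝ => z) * (deriv (χ:ℝ→ℝ)) := rfl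
    rw [h]; exact HasCompactSupport.mul_left χ.hasCompactSupport.deriv
  obtain ⟨M', hM'⟩ := hzχd.exists_bound_of_continuous
    (continuous_id.mul (hχcd.continuous_deriv (by exact_mod_cast le_top)))
  set M : ℝ := |MA0| + |MA1| + |MB0| + |MB1| + |M'| + 1 with hMdef
  have hM1 : 1 ≤ M := by
    have := abs_nonneg MA0; have := abs_nonneg MA1; have := abs_nonneg MB0
    have := abs_nonneg MB1; have := abs_nonneg M'
    simp only [hMdef]; linarith
  have hMpos : 0 < M := by linarith
  have hA0 : ∀ p, |A p| ≤ M := fun p => by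
    have h := hMA0 p; rw [Real.norm_eq_abs] at h
    have := le_abs_self MA0
    have := abs_nonneg MA1; have := abs_nonneg MB0; have := abs_nonneg MB1; have := abs_nonneg M'
    simp only [hMdef]; linarith
  have hB0 : ∀ p, |B p| ≤ M := fun p => by
    have h := hMB0 p; rw [Real.norm_eq_abs] at h
    have := le_abs_self MB0
    have := abs_nonneg MA0; have := abs_nonneg MA1; have := abs_nonneg MB1; have := abs_nonneg M'
    simp only [hMdef]; linarith
  have hA1 : ∀ p, ‖fderiv ℝ A p‖ ≤ M := fun p => by
    have h := hMA1 p
    have := le_abs_self MA1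
    have := abs_nonneg MA0; have := abs_nonneg MB0; have := abs_nonneg MB1; have := abs_nonneg M'
    simp only [hMdef]; linarith
  have hB1 : ∀ p, ‖fderiv ℝ B p‖ ≤ M := fun p => by
    have h := hMB1 p
    have := le_abs_self MB1
    have := abs_nonneg MA0; have := abs_nonneg MA1; have := abs_nonneg MB0; have := abs_nonneg M'
    simp only [hMdef]; linarith
  have hM'' : ∀ z : ℝ, |z * deriv (χ:ℝ→ℝ) z| ≤ M := fun z => by
    have h := hM' z; rw [Real.norm_eq_abs] at h
    have := le_abs_self M'
    have := abs_nonneg MA0; have := abs_nonneg MA1; have := abs_nonneg MB0; have := abs_nonneg MB1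
    simp only [hMdef]; linarith
  set δ : ℝ := min (ε/(2*M)) (min (η^2/(2*M)) (min (z₁^2/(4*M)) 1)) with hδdef
  have hδpos : 0 < δ := by
    apply lt_min (by positivity)
    exact lt_min (by positivity) (lt_min (by positivity) one_pos)
  have hδ1 : δ ≤ 1 := le_trans (min_le_right _ _) (le_trans (min_le_right _ _) (min_le_right _ _))
  have hδε : δ * M ≤ ε/2 := by
    have h : δ ≤ ε/(2*M) := min_le_left _ _
    calc δ * M ≤ (ε/(2*M)) * M := by nlinarith
      _ = ε/2 := by field_simp
  have hδη : δ * M ≤ η^2/2 := by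
    have h : δ ≤ η^2/(2*M) := le_trans (min_le_right _ _) (min_le_left _ _)
    calc δ * M ≤ (η^2/(2*M)) * M := by nlinarith
      _ = η^2/2 := by field_simp
  have hδz : δ * M ≤ z₁^2/4 := by
    have h : δ ≤ z₁^2/(4*M) :=
      le_trans (min_le_right _ _) (le_trans (min_le_right _ _) (min_le_left _ _))
    calc δ * M ≤ (z₁^2/(4*M)) * M := by nlinarith
      _ = z₁^2/4 := by field_simp
  set c : ℝ := δ^2/2 with hcdef
  have hcpos : 0 < c := by positivity
  have hcδ : c ≤ δ/2 := by nlinarith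
  refine ⟨fun p => RegHelper.Ff (n-1) p + (δ * A p + c * B p), ?_, ?_, ?_, ?_⟩
  · exact (RegHelper.contDiff_Ff (n-1)).add
      ((contDiff_const.mul hAc).add (contDiff_const.mul hBc))
  · intro p
    rw [RegHelper.ufun_eq]
    have habs : |δ * A p + c * B p| ≤ ε := by
      calc |δ * A p + c * B p| ≤ |δ * A p| + |c * B p| := abs_add_le _ _
        _ = δ * |A p| + c * |B p| := by
            simp only [abs_mul, abs_of_nonneg hδpos.le, abs_of_nonneg hcpos.le]
        _ ≤ δ * M + c * M := by
            have h1 := hA0 p; have h2 := hB0 p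
            nlinarith
        _ ≤ ε := by nlinarith
    constructor
    · have h1 : RegHelper.Ff (n-1) p + (δ * A p + c * B p) - RegHelper.Ff (n-1) p
          = δ * A p + c * B p := by ring
      show |RegHelper.Ff (n-1) p + (δ * A p + c * B p) - RegHelper.Ff (n-1) p| ≤ ε
      rw [h1]; exact habs
    · have hdF : DifferentiableAt ℝ (RegHelper.Ff (n-1)) p :=
        (RegHelper.contDiff_Ff (n-1)).differentiable (by simp) p
      have hdA : DifferentiableAt ℝ A p := hAc.differentiable (by simp) p
      have hdB : DifferentiableAt ℝ B p := hBc.differentiable (by simp) p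
      have h1 : fderiv ℝ (fun p => RegHelper.Ff (n-1) p + (δ * A p + c * B p)) p
          = fderiv ℝ (RegHelper.Ff (n-1)) p + (δ • fderiv ℝ A p + c • fderiv ℝ B p) := by
        rw [fderiv_fun_add (g := fun y => δ * A y + c * B y) hdF ((hdA.const_mul δ).add (hdB.const_mul c)),
          fderiv_fun_add (hdA.const_mul δ) (hdB.const_mul c),
          fderiv_const_mul hdA δ, fderiv_const_mul hdB c]
      rw [h1]
      have h2 : fderiv ℝ (RegHelper.Ff (n-1)) p + (δ • fderiv ℝ A p + c • fderiv ℝ B p)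
          - fderiv ℝ (RegHelper.Ff (n-1)) p = δ • fderiv ℝ A p + c • fderiv ℝ B p := by
        abel
      rw [h2]
      calc ‖δ • fderiv ℝ A p + c • fderiv ℝ B p‖
          ≤ ‖δ • fderiv ℝ A p‖ + ‖c • fderiv ℝ B p‖ := norm_add_le _ _
        _ = δ * ‖fderiv ℝ A p‖ + c * ‖fderiv ℝ B p‖ := by
            rw [norm_smul, norm_smul, Real.norm_eq_abs, Real.norm_eq_abs,
              abs_of_nonneg hδpos.le, abs_of_nonneg hcpos.le]
        _ ≤ δ * M + c * M := by
            have h1 := hA1 p; have h2 := hB1 p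
            nlinarith
        _ ≤ ε := by nlinarith
  · -- positivity of the z-derivative
    intro p
    have hu : HasDerivAt (fun z : ℝ => RegHelper.Ff (n-1) (p.1, z))
        ((p.2^2 + ‖p.1‖^2 - 1)^2) p.2 := RegHelper.hasDerivAt_slice (‖p.1‖^2) p.2
    have hgoal : ∀ DA DB : ℝ,
        HasDerivAt (fun z => A (p.1, z)) DA p.2 →
        HasDerivAt (fun z => B (p.1, z)) DB p.2 →
        0 < (p.2^2 + ‖p.1‖^2 - 1)^2 + (δ * DA + c * DB) →
        0 < deriv (fun z => RegHelper.Ff (n-1) (p.1, z) + (δ * A (p.1, z) + c * B (p.1, z))) p.2 := by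
      intro DA DB hA' hB' hpos
      rw [HasDerivAt.deriv (f := fun z => RegHelper.Ff (n-1) (p.1, z) + (δ * A (p.1, z) + c * B (p.1, z))) (hu.add ((hA'.const_mul δ).add (hB'.const_mul c)))]
      exact hpos
    show 0 < deriv (fun z => RegHelper.Ff (n-1) (p.1, z) + (δ * A (p.1, z) + c * B (p.1, z))) p.2
    by_cases hq : |RegHelper.qf p| < η
    · -- near the sphere: the bump ψ is локally 1
      have hcq : Continuous (fun z : ℝ => RegHelper.qf ((p.1, z) :
          EuclideanSpace ℝ (Fin (n-1)) × ℝ)) := by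
        simp only [RegHelper.qf]
        fun_prop
      have hmem : {z : ℝ | |RegHelper.qf ((p.1, z) :
          EuclideanSpace ℝ (Fin (n-1)) × ℝ)| < η} ∈ nhds p.2 := by
        have hop : IsOpen {z : ℝ | |RegHelper.qf ((p.1, z) :
            EuclideanSpace ℝ (Fin (n-1)) × ℝ)| < η} :=
          isOpen_lt (continuous_abs.comp hcq) continuous_const
        apply hop.mem_nhds
        show |RegHelper.qf ((p.1, p.2) : EuclideanSpace ℝ (Fin (n-1)) × ℝ)| < η
        rwa [Prod.mk.eta]
      have hev : ∀ᶠ z in nhds p.2, ψ (RegHelper.qf ((p.1, z) :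
          EuclideanSpace ℝ (Fin (n-1)) × ℝ)) = 1 := by
        filter_upwards [hmem] with z hz
        exact ψ.one_of_mem_closedBall (by
          simp only [Metric.mem_closedBall, Real.dist_eq, sub_zero]
          exact le_of_lt hz)
      have hqz : HasDerivAt (fun z : ℝ => ‖p.1‖^2 + z^2 - 1) (2*p.2) p.2 := by
        have h := ((hasDerivAt_pow 2 p.2).const_add (‖p.1‖^2)).sub_const 1
        exact h.congr_deriv (by norm_num)
      have hAev : (fun z => A ((p.1, z) : EuclideanSpace ℝ (Fin (n-1)) × ℝ))
          =ᶠ[nhds p.2] (fun z => (‖p.1‖^2 + z^2 - 1) * z) := by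
        filter_upwards [hev] with z hz
        have hz' : ψ (‖p.1‖^2 + z^2 - 1) = 1 := hz
        simp only [hAdef, RegHelper.qf, hz', mul_one]
      have hA' : HasDerivAt (fun z => A ((p.1, z) : EuclideanSpace ℝ (Fin (n-1)) × ℝ))
          (2*p.2*p.2 + (‖p.1‖^2 + p.2^2 - 1)*1) p.2 :=
        (hqz.mul (hasDerivAt_id p.2)).congr_of_eventuallyEq hAev
      have hqabs := abs_lt.1 hq
      have hqeq : RegHelper.qf p = ‖p.1‖^2 + p.2^2 - 1 := rfl
      rw [hqeq] at hqabs
      by_cases hzs : |p.2| < z₁/2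
      · have hmemχ : {z : ℝ | |z| < z₁/2} ∈ nhds p.2 :=
          (isOpen_lt continuous_abs continuous_const).mem_nhds hzs
        have hBev : (fun z => B ((p.1, z) : EuclideanSpace ℝ (Fin (n-1)) × ℝ))
            =ᶠ[nhds p.2] (fun z : ℝ => z) := by
          filter_upwards [hev, hmemχ] with z hz1 hz2
          have hχ1 : χ z = 1 := χ.one_of_mem_closedBall (by
            simp only [Metric.mem_closedBall, Real.dist_eq, sub_zero]
            exact le_of_lt hz2)
          have hz1' : ψ (RegHelper.qf ((p.1, z) : EuclideanSpace ℝ (Fin (n-1)) × ℝ)) = 1 := hz1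
          simp only [hBdef, hz1', hχ1, mul_one]
        have hB' : HasDerivAt (fun z => B ((p.1, z) : EuclideanSpace ℝ (Fin (n-1)) × ℝ))
            1 p.2 := (hasDerivAt_id p.2).congr_of_eventuallyEq hBev
        apply hgoal _ _ hA' hB'
        have := RegHelper.arith1 (‖p.1‖^2) p.2 δ c hδpos hcdef
        linarith
      · have hχd : HasDerivAt (fun z : ℝ => (χ : ℝ → ℝ) z) (deriv (χ : ℝ → ℝ) p.2) p.2 :=
          ((hχcd.differentiable (by simp)) p.2).hasDerivAt
        have hBev : (fun z => B ((p.1, z) : EuclideanSpace ℝ (Fin (n-1)) × ℝ))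
            =ᶠ[nhds p.2] (fun z : ℝ => z * χ z) := by
          filter_upwards [hev] with z hz
          have hz' : ψ (RegHelper.qf ((p.1, z) : EuclideanSpace ℝ (Fin (n-1)) × ℝ)) = 1 := hz
          simp only [hBdef, hz', mul_one]
        have hB' : HasDerivAt (fun z => B ((p.1, z) : EuclideanSpace ℝ (Fin (n-1)) × ℝ))
            (1 * χ p.2 + p.2 * deriv (χ : ℝ → ℝ) p.2) p.2 :=
          ((hasDerivAt_id p.2).mul hχd).congr_of_eventuallyEq hBev
        apply hgoal _ _ hA' hB'
        have hz2 : z₁/2 ≤ |p.2| := not_lt.1 hzs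
        have hz2' : z₁^2/4 ≤ p.2^2 := RegHelper.sq_quarter_le hz2 hz₁pos.le
        have hχn : (0:ℝ) ≤ χ p.2 := χ.nonneg
        have habs' := (abs_le.1 (hM'' p.2)).1
        have hql : -(z₁^2/8) < ‖p.1‖^2 + p.2^2 - 1 := by
          have h := hqabs.1
          rw [hηdef] at h
          linarith
        exact RegHelper.arith2 (‖p.1‖^2) p.2 δ c z₁ M (χ p.2) (p.2 * deriv (χ : ℝ → ℝ) p.2)
          hδpos hcdef hM1 hδz hql hz2' hχn habs' hz₁pos
    · -- away from the sphere: use the global derivative bound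
      have hdA : HasFDerivAt A (fderiv ℝ A (p.1, p.2)) (p.1, p.2) :=
        (hAc.differentiable (by simp) (p.1, p.2)).hasFDerivAt
      have hdB : HasFDerivAt B (fderiv ℝ B (p.1, p.2)) (p.1, p.2) :=
        (hBc.differentiable (by simp) (p.1, p.2)).hasFDerivAt
      have hcurve : HasDerivAt (fun z : ℝ => ((p.1, z) : EuclideanSpace ℝ (Fin (n-1)) × ℝ))
          (((0 : EuclideanSpace ℝ (Fin (n-1))), (1:ℝ))) p.2 :=
        HasDerivAt.prodMk (hasDerivAt_const p.2 p.1) (hasDerivAt_id p.2)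
      have hA' : HasDerivAt (fun z => A ((p.1, z) : EuclideanSpace ℝ (Fin (n-1)) × ℝ))
          ((fderiv ℝ A (p.1, p.2)) ((0 : EuclideanSpace ℝ (Fin (n-1))), (1:ℝ))) p.2 :=
        hdA.comp_hasDerivAt p.2 hcurve
      have hB' : HasDerivAt (fun z => B ((p.1, z) : EuclideanSpace ℝ (Fin (n-1)) × ℝ))
          ((fderiv ℝ B (p.1, p.2)) ((0 : EuclideanSpace ℝ (Fin (n-1))), (1:ℝ))) p.2 :=
        hdB.comp_hasDerivAt p.2 hcurve
      apply hgoal _ _ hA' hB'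
      have hnorm1 : ‖((0 : EuclideanSpace ℝ (Fin (n-1))), (1:ℝ))‖ = 1 := by
        simp [Prod.norm_def]
      have hDA : |(fderiv ℝ A (p.1, p.2)) ((0 : EuclideanSpace ℝ (Fin (n-1))), (1:ℝ))| ≤ M := by
        have h := (fderiv ℝ A (p.1, p.2)).le_opNorm ((0 : EuclideanSpace ℝ (Fin (n-1))), (1:ℝ))
        rw [hnorm1, mul_one] at h
        rw [← Real.norm_eq_abs]
        exact le_trans h (hA1 (p.1, p.2))
      have hDB : |(fderiv ℝ B (p.1, p.2)) ((0 : EuclideanSpace ℝ (Fin (n-1))), (1:ℝ))| ≤ M := by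
        have h := (fderiv ℝ B (p.1, p.2)).le_opNorm ((0 : EuclideanSpace ℝ (Fin (n-1))), (1:ℝ))
        rw [hnorm1, mul_one] at h
        rw [← Real.norm_eq_abs]
        exact le_trans h (hB1 (p.1, p.2))
      have hq' : η ≤ |RegHelper.qf p| := not_lt.1 hq
      have hq'' : η ≤ |‖p.1‖^2 + p.2^2 - 1| := hq'
      exact RegHelper.arith3 (‖p.1‖^2) p.2 δ c η M _ _
        hδpos hδ1 hcdef hM1 hδη hηpos hq'' hDA hDB
  · -- agreement on the sphere away from U
    intro p hp hpU
    have hq0 : RegHelper.qf p = 0 := by simp only [RegHelper.qf]; linarith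
    have hψ1 : ψ (RegHelper.qf p) = 1 := by
      apply ψ.one_of_mem_closedBall
      simp only [hq0, Metric.mem_closedBall, dist_zero_left, norm_zero]
      exact hηpos.le
    have hB0' : p.2 * χ p.2 = 0 := by
      by_contra hB
      have hχne : χ p.2 ≠ 0 := fun h => hB (by rw [h, mul_zero])
      have : p.2 ∈ Function.support (χ : ℝ → ℝ) := hχne
      rw [χ.support_eq] at this
      have hz : |p.2| < z₁ := by
        simpa [Real.dist_eq] using this
      obtain ⟨e, he, hde⟩ := RegHelper.sphere_near_equator hz₁pos hz₁le p hp hz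
      exact hpU (hrU (Metric.mem_thickening_iff.2 ⟨e, he, lt_of_le_of_lt hde hz₁r⟩))
    have hA0' : A p = 0 := by
      simp only [hAdef, hq0, zero_mul]
    have hB0'' : B p = 0 := by
      simp only [hBdef, hψ1, mul_one, hB0']
    show RegHelper.Ff (n-1) p + (δ * A p + c * B p) = ufun (n-1) p
    rw [RegHelper.ufun_eq, hA0', hB0'']
    ring
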